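/- Let N ≥ 1 and 1 ≤ k ≤ N, and let L : Fin N → ℝ. Set t* := L_(k), the k-th largest value of L, and λ*_i := max(L_i − t*, 0) for each i. Then (t*, λ*) satisfies the constraints λ*_i ≥ L_i − t* and λ*_i ≥ 0 for all i, and k·t* + Σ_i λ*_i = S_k(L), the sum of the k largest values of L. -/
import Mathlib

open Finset

/-- The values of `L : Fin N → ℝ` rearranged in nonincreasing order. -/
noncomputable def sortedDesc {N : ℕ} (L : Fin N → ℝ) : Fin N → ℝ :=
  fun j => L (Tuple.sort L j.rev)

/-- The `k`-th largest value (with `k` 1-indexed) of `L : Fin N → ℝ`. -/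
noncomputable def kthLargest {N : ℕ} (L : Fin N → ℝ) (k : ℕ) (h : k - 1 < N) : ℝ :=
  sortedDesc L ⟨k - 1, h⟩

/-- The sum of the `k` largest values of `L : Fin N → ℝ`. -/
noncomputable def sumKLargest {N : ℕ} (L : Fin N → ℝ) (k : ℕ) : ℝ :=
  ∑ j ∈ Finset.univ.filter (fun j : Fin N => (j : ℕ) < k), sortedDesc L j

lemma sortedDesc_antitone {N : ℕ} (L : Fin N → ℝ) : Antitone (sortedDesc L) := by
  intro a b hab
  exact Tuple.monotone_sort L (Fin.rev_le_rev.mpr hab)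

lemma card_filter_lt_fin {N k : ℕ} :
    (univ.filter fun j : Fin N => (j : ℕ) < k).card = min k N := by
  rw [Finset.card_filter, Fin.sum_univ_eq_sum_range (fun i => if i < k then 1 else 0),
    ← Finset.sum_filter]
  have : (range N).filter (fun i => i < k) = range (min k N) := by
    ext i; simp; omega
  simp [this]

lemma sum_comp_sortedDesc {N : ℕ} (L : Fin N → ℝ) (f : ℝ → ℝ) :
    ∑ i, f (L i) = ∑ j, f (sortedDesc L j) := by
  have := Equiv.sum_comp ((Fin.revPerm).trans (Tuple.sort L)) (fun x => f (L x))
  exact this.symm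

/-- with `t* := L_(k)` (the `k`-th largest value of `L`) and
`λ*_i := max (L i - t*) 0`, the pair `(t*, λ*)` is feasible and achieves
`k * t* + ∑ i, λ*_i = S_k(L)`. -/
theorem optimal_pair_achieves_sumKLargest (N k : ℕ) (hN : 1 ≤ N) (hk1 : 1 ≤ k) (hkN : k ≤ N)
    (L : Fin N → ℝ) :
    (∀ i, max (L i - kthLargest L k (by omega)) 0 ≥ L i - kthLargest L k (by omega)) ∧
      (∀ i, max (L i - kthLargest L k (by omega)) 0 ≥ 0) ∧
      (k : ℝ) * kthLargest L k (by omega) +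
          ∑ i, max (L i - kthLargest L k (by omega)) 0 = sumKLargest L k := by
  have hlt : k - 1 < N := by omega
  set t := kthLargest L k hlt with ht
  refine ⟨fun i => le_max_left _ _, fun i => le_max_right _ _, ?_⟩
  rw [sum_comp_sortedDesc L (fun x => max (x - t) 0)]
  rw [← Finset.sum_filter_add_sum_filter_not univ (fun j : Fin N => (j : ℕ) < k)]
  have h1 : ∀ j ∈ univ.filter (fun j : Fin N => (j : ℕ) < k),
      max (sortedDesc L j - t) 0 = sortedDesc L j - t := by
    intro j hj
    rw [Finset.mem_filter] at hj
    have hle : j ≤ (⟨k - 1, hlt⟩ : Fin N) := by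
      rw [Fin.le_def]; simp; omega
    have := sortedDesc_antitone L hle
    rw [ht, kthLargest] at *
    exact max_eq_left (by linarith)
  have h2 : ∀ j ∈ univ.filter (fun j : Fin N => ¬ (j : ℕ) < k),
      max (sortedDesc L j - t) 0 = 0 := by
    intro j hj
    rw [Finset.mem_filter] at hj
    have hle : (⟨k - 1, hlt⟩ : Fin N) ≤ j := by
      rw [Fin.le_def]; simp; omega
    have := sortedDesc_antitone L hle
    rw [ht, kthLargest] at *
    exact max_eq_right (by linarith)
  rw [Finset.sum_congr rfl h1, Finset.sum_congr rfl h2, Finset.sum_sub_distrib,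
    Finset.sum_const, card_filter_lt_fin, Nat.min_eq_left hkN]
  simp [sumKLargest]
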